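/- Let [a_1,...,a_n] = p_n/q_n in lowest terms (p_n, q_n given by the standard convergent recursions). Then the palindromification satisfies [a_n,...,a_2,a_1,a_1,a_2,...,a_n] = (p_n² + q_n²)/(p_{n-1} p_n + q_{n-1} q_n), and this fraction is in lowest terms. -/

import Mathlib

/-- Value of the continued fraction [a₁,...,aₙ] = a₁ + 1/(a₂ + 1/(... + 1/aₙ)). -/
def cfQ : List ℚ → ℚ
  | [] => 0
  | [a] => a
  | a :: b :: l => a + 1 / cfQ (b :: l)

/-- The continuant: `cont [a₁,...,aₙ]` is the numerator N[a₁,...,aₙ] of the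
continued fraction [a₁,...,aₙ], with N[] = 1. -/
def cont : List ℕ → ℕ
  | [] => 1
  | [a] => a
  | a :: b :: l => a * cont (b :: l) + cont l

/-- `contD [a₁,...,aₙ]` is the denominator of the continued fraction
[a₁,...,aₙ], i.e. N[a₂,...,aₙ], with the convention that the empty
continued fraction has denominator 0. -/
def contD : List ℕ → ℕ
  | [] => 0
  | _ :: l => cont l

@[simp] lemma contD_nil : contD [] = 0 := rfl
@[simp] lemma contD_cons (a : ℕ) (l : List ℕ) : contD (a :: l) = cont l := rfl
@[simp] lemma cont_nil : cont [] = 1 := rfl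

lemma cont_cons (a : ℕ) (l : List ℕ) : cont (a :: l) = a * cont l + contD l := by
  cases l with
  | nil => simp [cont]
  | cons b l => simp [cont]

lemma cont_pos {l : List ℕ} (h : ∀ x ∈ l, 0 < x) : 0 < cont l := by
  induction l using cont.induct with
  | case1 => simp
  | case2 a => simpa [cont] using h a (by simp)
  | case3 a b l ih1 ih2 =>
    simp only [cont]
    have := h a (by simp)
    have h1 := ih1 (fun x hx => h x (by simp [hx]))
    positivity

lemma cont_append (A B : List ℕ) (hA : A ≠ []) :
    cont (A ++ B) = cont A * cont B + cont A.dropLast * contD B ∧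
    contD (A ++ B) = contD A * cont B + contD A.dropLast * contD B := by
  induction A with
  | nil => simp at hA
  | cons a A ih =>
    cases A with
    | nil => simp [cont_cons]
    | cons b A' =>
      obtain ⟨h1, h2⟩ := ih (by simp)
      have hdl : (a :: b :: A').dropLast = a :: (b :: A').dropLast := rfl
      constructor
      · rw [List.cons_append, cont_cons a, h1, h2,
          hdl, cont_cons a (b :: A'), cont_cons a ((b :: A').dropLast)]
        ring
      · rw [List.cons_append, contD_cons, h1, hdl, contD_cons, contD_cons]

lemma cont_reverse : ∀ (n : ℕ) (l : List ℕ), l.length = n → cont l.reverse = cont l := by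
  intro n
  induction n using Nat.strong_induction_on with
  | _ n ih =>
    intro l hl
    match l with
    | [] => simp
    | [a] => simp
    | a :: b :: l' =>
      have hA : (b :: l').reverse ≠ [] := by simp
      rw [List.reverse_cons, (cont_append _ _ hA).1, List.dropLast_reverse]
      have e1 : cont (b :: l').reverse = cont (b :: l') := by
        apply ih (b :: l').length (by simp [← hl]) _ rfl
      have e2 : cont l'.reverse = cont l' := by
        apply ih l'.length (by simp [← hl]) _ rfl
      simp only [List.tail_cons] at *
      rw [e1, e2]
      simp [cont, cont_cons]
      ring

lemma det (l : List ℕ) (hl : l ≠ []) :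
    (cont l : ℤ) * contD l.dropLast - cont l.dropLast * contD l = (-1) ^ l.length := by
  induction l using cont.induct with
  | case1 => simp at hl
  | case2 a => simp [cont]
  | case3 a b l' ih1 ih2 =>
    have hdl : (a :: b :: l').dropLast = a :: (b :: l').dropLast := rfl
    have h := ih1 (by simp)
    rw [hdl, cont_cons a (b :: l'), contD_cons a ((b :: l').dropLast),
      cont_cons a ((b :: l').dropLast), contD_cons a (b :: l'), List.length_cons, pow_succ]
    push_cast
    linear_combination (-1 : ℤ) * h

lemma coprime_cont_contD (l : List ℕ) (hl : l ≠ []) : Nat.Coprime (cont l) (contD l) := by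
  have h := det l hl
  set g := Nat.gcd (cont l) (contD l) with hg
  have d1 : (g : ℤ) ∣ (cont l : ℤ) := Int.natCast_dvd_natCast.2 (Nat.gcd_dvd_left _ _)
  have d2 : (g : ℤ) ∣ (contD l : ℤ) := Int.natCast_dvd_natCast.2 (Nat.gcd_dvd_right _ _)
  have hd : (g : ℤ) ∣ (-1) ^ l.length := by
    rw [← h]
    exact dvd_sub (d1.mul_right _) (d2.mul_left _)
  have hu : IsUnit ((-1 : ℤ) ^ l.length) := (isUnit_one.neg).pow _
  have h1 : (g : ℤ) ∣ 1 := hd.trans hu.dvd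
  have : g ∣ 1 := by exact_mod_cast h1
  exact Nat.dvd_one.mp this

lemma contD_eq_cont_tail (l : List ℕ) (hl : l ≠ []) : contD l = cont l.tail := by
  cases l with
  | nil => simp at hl
  | cons a t => rfl

lemma contD_reverse (l : List ℕ) (hl : l ≠ []) : contD l.reverse = cont l.dropLast := by
  rw [contD_eq_cont_tail _ (by simpa using hl), List.tail_reverse,
    cont_reverse _ _ rfl]

lemma cfQ_eq (l : List ℕ) (hl : l ≠ []) (hpos : ∀ x ∈ l, 0 < x) :
    0 < cfQ (l.map (fun x => (x : ℚ))) ∧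
      cfQ (l.map (fun x => (x : ℚ))) = (cont l : ℚ) / (contD l : ℚ) := by
  induction l using cont.induct with
  | case1 => simp at hl
  | case2 a =>
    have := hpos a (by simp)
    constructor
    · simp [cfQ]
      exact_mod_cast this
    · simp [cfQ, cont, contD]
  | case3 a b l' ih1 ih2 =>
    obtain ⟨hp, he⟩ := ih1 (by simp) (fun x hx => hpos x (by simp [hx]))
    have hc : 0 < cont (b :: l') := cont_pos (fun x hx => hpos x (by simp [hx]))
    have hcq : (0 : ℚ) < (cont (b :: l') : ℚ) := by exact_mod_cast hc
    have hd : 0 < cont l' := cont_pos (fun x hx => hpos x (by simp [hx]))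
    have ha := hpos a (by simp)
    have haq : (0 : ℚ) < (a : ℚ) := by exact_mod_cast ha
    have hcf : cfQ ((a :: b :: l').map (fun x => (x : ℚ))) =
        (a : ℚ) + 1 / cfQ ((b :: l').map (fun x => (x : ℚ))) := by
      rfl
    constructor
    · rw [hcf]
      positivity
    · rw [hcf, he, one_div_div, cont_cons a (b :: l'), contD_cons]
      push_cast
      simp only [contD_cons]
      field_simp

/-- If [a₁,...,aₙ] = pₙ/qₙ, then
[aₙ,...,a₂,a₁,a₁,a₂,...,aₙ] = (pₙ² + qₙ²)/(pₙ₋₁pₙ + qₙ₋₁qₙ), in lowest terms.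
Here pₙ = cont l, qₙ = contD l, pₙ₋₁ = cont l.dropLast, qₙ₋₁ = contD l.dropLast. -/
theorem stmt3 (l : List ℕ) (hl : l ≠ []) (hpos : ∀ x ∈ l, 0 < x) :
    cfQ ((l.reverse ++ l).map (fun x => (x : ℚ))) =
      ((cont l : ℚ) ^ 2 + (contD l : ℚ) ^ 2) /
        ((cont l.dropLast : ℚ) * (cont l : ℚ) + (contD l.dropLast : ℚ) * (contD l : ℚ)) ∧
    Nat.Coprime ((cont l) ^ 2 + (contD l) ^ 2)
      ((cont l.dropLast) * (cont l) + (contD l.dropLast) * (contD l)) := by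
  have hrl : l.reverse ≠ [] := by simpa using hl
  have hm : l.reverse ++ l ≠ [] := by simp [hl]
  have hmpos : ∀ x ∈ l.reverse ++ l, 0 < x := by
    intro x hx
    rcases List.mem_append.mp hx with h | h
    · exact hpos x (List.mem_reverse.mp h)
    · exact hpos x h
  have hnum : cont (l.reverse ++ l) = cont l ^ 2 + contD l ^ 2 := by
    rw [(cont_append _ _ hrl).1, cont_reverse _ _ rfl, List.dropLast_reverse,
      cont_reverse _ _ rfl, ← contD_eq_cont_tail _ hl]
    ring
  have hden : contD (l.reverse ++ l) =
      cont l.dropLast * cont l + contD l.dropLast * contD l := by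
    rw [(cont_append _ _ hrl).2, contD_reverse _ hl, List.dropLast_reverse]
    congr 1
    congr 1
    rcases eq_or_ne l.tail [] with ht | ht
    · have hdl : l.dropLast = [] := by
        cases l with
        | nil => rfl
        | cons a t => simp at ht; simp [ht]
      simp [ht, hdl]
    · rw [contD_reverse _ ht, contD_eq_cont_tail _ (by
        cases l with
        | nil => simp at hl
        | cons a t => simpa [List.dropLast_cons_of_ne_nil (by simpa using ht)] using (by simp : (a :: t.dropLast ≠ [])) )]
      congr 1
      cases l with
      | nil => rfl
      | cons a t =>
        simp [List.dropLast_cons_of_ne_nil (by simpa using ht : t ≠ [])]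
  constructor
  · rw [(cfQ_eq _ hm hmpos).2, hnum, hden]
    push_cast
    ring
  · have := coprime_cont_contD (l.reverse ++ l) hm
    rwa [hnum, hden] at this
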